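/- Let $f, h : [0,1] \to \mathbb{R}$ be Lebesgue integrable and define $D : [0,1] \to \mathbb{R}$ by $D(x) = \operatorname{sgn}(f(x))\,h(x)$ if $f(x) \neq 0$ and $D(x) = |h(x)|$ if $f(x) = 0$. Then $\lim_{t \to 0^+} \int_0^1 \Big| \frac{|f(x)+t\,h(x)| - |f(x)|}{t} - D(x) \Big|\,dx = 0$; moreover the integrand is dominated: $\big|\frac{|f(x)+t h(x)|-|f(x)|}{t} - D(x)\big| \le 2|h(x)|$ for all $t > 0$ and all $x$. -/

import Mathlib

open MeasureTheory

lemma aemeasurable_abs' {α : Type*} [MeasurableSpace α] {μ : MeasureTheory.Measure α}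
    {g : α → ℝ} (hg : AEMeasurable g μ) : AEMeasurable (fun x => |g x|) μ :=
  measurable_abs.comp_aemeasurable hg

lemma real_sign_measurable' : Measurable Real.sign := by
  unfold Real.sign
  exact Measurable.ite (measurableSet_lt measurable_id measurable_const)
    measurable_const
    (Measurable.ite (measurableSet_lt measurable_const measurable_id)
      measurable_const measurable_const)

lemma real_sign_abs_le' (a : ℝ) : |Real.sign a| ≤ 1 := by
  rcases lt_trichotomy a 0 with h | h | h
  · rw [Real.sign_of_neg h]; norm_num
  · rw [h, Real.sign_zero]; norm_num
  · rw [Real.sign_of_pos h]; norm_num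

/-- `L¹`-convergence of the difference quotients of the pointwise absolute value map:
with `D(x) = sgn(f(x)) h(x)` if `f(x) ≠ 0` and `D(x) = |h(x)|` otherwise,
`∫₀¹ |(|f+th| - |f|)/t - D| → 0` as `t → 0⁺`, and the integrand is dominated by `2|h|`. -/
theorem abs_diff_quotient_L1_tendsto (f h : ℝ → ℝ)
    (hf : IntegrableOn f (Set.Icc (0 : ℝ) 1)) (hh : IntegrableOn h (Set.Icc (0 : ℝ) 1))
    (D : ℝ → ℝ)
    (hD : ∀ x, D x = if f x ≠ 0 then Real.sign (f x) * h x else |h x|) :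
    Filter.Tendsto
      (fun t : ℝ => ∫ x in Set.Icc (0 : ℝ) 1, |((|f x + t * h x| - |f x|) / t - D x)|)
      (nhdsWithin 0 (Set.Ioi 0)) (nhds 0) ∧
    ∀ t : ℝ, 0 < t → ∀ x : ℝ, |((|f x + t * h x| - |f x|) / t - D x)| ≤ 2 * |h x| := by
  -- |D x| ≤ |h x|
  have hDle : ∀ x, |D x| ≤ |h x| := by
    intro x
    rw [hD x]
    by_cases hx : f x ≠ 0
    · rw [if_pos hx, abs_mul]
      calc |Real.sign (f x)| * |h x| ≤ 1 * |h x| :=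
            mul_le_mul_of_nonneg_right (real_sign_abs_le' _) (abs_nonneg _)
        _ = |h x| := one_mul _
    · rw [if_neg hx, abs_abs]
  -- the domination bound
  have hbound : ∀ t : ℝ, 0 < t → ∀ x : ℝ,
      |((|f x + t * h x| - |f x|) / t - D x)| ≤ 2 * |h x| := by
    intro t ht x
    have h1 : |(|f x + t * h x| - |f x|) / t| ≤ |h x| := by
      rw [abs_div, abs_of_pos ht]
      rw [div_le_iff₀ ht]
      calc |(|f x + t * h x| - |f x|)| ≤ |(f x + t * h x) - f x| := abs_abs_sub_abs_le_abs_sub _ _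
        _ = |t * h x| := by ring_nf
        _ = t * |h x| := by rw [abs_mul, abs_of_pos ht]
        _ = |h x| * t := mul_comm _ _
    calc |((|f x + t * h x| - |f x|) / t - D x)|
        ≤ |(|f x + t * h x| - |f x|) / t| + |D x| := abs_sub _ _
      _ ≤ |h x| + |h x| := add_le_add h1 (hDle x)
      _ = 2 * |h x| := by ring
  refine ⟨?_, hbound⟩
  -- closed form for D, to get measurability
  have hD' : D = fun x => Real.sign (f x) * h x + (1 - |Real.sign (f x)|) * |h x| := by
    funext x
    rw [hD x]
    by_cases hx : f x ≠ 0
    · rw [if_pos hx]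
      have : |Real.sign (f x)| = 1 := by
        rcases hx.lt_or_gt with hlt | hgt
        · rw [Real.sign_of_neg hlt]; norm_num
        · rw [Real.sign_of_pos hgt]; norm_num
      rw [this]; ring
    · push_neg at hx
      rw [if_neg (by simpa using hx), hx, Real.sign_zero]
      norm_num
  set μ := volume.restrict (Set.Icc (0 : ℝ) 1) with hμ
  have hfm : AEStronglyMeasurable f μ := hf.1
  have hhm : AEStronglyMeasurable h μ := hh.1
  have hsm : AEStronglyMeasurable (fun x => Real.sign (f x)) μ :=
    (real_sign_measurable'.comp_aemeasurable hfm.aemeasurable).aestronglyMeasurable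
  have hDm : AEStronglyMeasurable D μ := by
    rw [hD']
    exact ((hsm.aemeasurable.mul hhm.aemeasurable).add
      ((aemeasurable_const.sub (aemeasurable_abs' hsm.aemeasurable)).mul (aemeasurable_abs' hhm.aemeasurable))).aestronglyMeasurable
  have hFm : ∀ t : ℝ, AEStronglyMeasurable
      (fun x => |((|f x + t * h x| - |f x|) / t - D x)|) μ := by
    intro t
    exact (aemeasurable_abs' ((((aemeasurable_abs' (hfm.aemeasurable.add
      (hhm.aemeasurable.const_mul t))).sub (aemeasurable_abs' hfm.aemeasurable)).div_const
      t).sub hDm.aemeasurable)).aestronglyMeasurable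
  -- dominated convergence
  have key := MeasureTheory.tendsto_integral_filter_of_dominated_convergence
    (μ := μ) (l := nhdsWithin (0:ℝ) (Set.Ioi 0))
    (F := fun t x => |((|f x + t * h x| - |f x|) / t - D x)|)
    (f := fun _ => (0:ℝ)) (bound := fun x => 2 * |h x|)
    (Filter.Eventually.of_forall hFm)
    (by
      filter_upwards [self_mem_nhdsWithin] with t ht
      filter_upwards with x
      rw [Real.norm_eq_abs, abs_abs]
      exact hbound t ht x)
    (by
      have : Integrable (fun x => |h x|) μ := by
        simpa [Real.norm_eq_abs] using hh.norm
      exact this.const_mul 2)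
    (by
      filter_upwards with x
      -- pointwise: eventually equal to 0
      have hev : ∀ᶠ t : ℝ in nhdsWithin 0 (Set.Ioi 0),
          |((|f x + t * h x| - |f x|) / t - D x)| = 0 := by
        by_cases hx : f x = 0
        · filter_upwards [self_mem_nhdsWithin] with t ht
          have ht' : (0:ℝ) < t := ht
          rw [hD x, if_neg (by simpa using hx), hx]
          rw [abs_eq_zero]
          field_simp
          rw [zero_add, abs_zero, abs_mul, abs_of_pos ht']
          ring
        · set δ := |f x| / (|h x| + 1) with hδ
          have hδpos : 0 < δ := div_pos (abs_pos.mpr hx) (by positivity)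
          filter_upwards [Ioo_mem_nhdsGT_of_mem (Set.mem_Ico.mpr ⟨le_refl 0, hδpos⟩)]
            with t ht
          obtain ⟨ht0, htδ⟩ := ht
          have hpos1 : (0:ℝ) < |h x| + 1 := by positivity
          have hsmall : t * |h x| < |f x| := by
            calc t * |h x| ≤ t * (|h x| + 1) := by nlinarith
              _ < δ * (|h x| + 1) := mul_lt_mul_of_pos_right htδ hpos1
              _ = |f x| := by rw [hδ]; field_simp
          rw [hD x, if_pos hx, abs_eq_zero]
          rcases lt_or_gt_of_ne hx with hneg | hpos
          · have habs : |f x| = -f x := abs_of_neg hneg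
            have h2 : f x + t * h x < 0 := by
              have : t * h x ≤ t * |h x| := by nlinarith [le_abs_self (h x)]
              nlinarith [habs]
            rw [abs_of_neg h2, habs, Real.sign_of_neg hneg]
            field_simp
            ring
          · have habs : |f x| = f x := abs_of_pos hpos
            have h2 : 0 < f x + t * h x := by
              have : -(t * |h x|) ≤ t * h x := by nlinarith [neg_abs_le (h x)]
              nlinarith [habs]
            rw [abs_of_pos h2, habs, Real.sign_of_pos hpos]
            field_simp
            ring
      exact Filter.Tendsto.congr' (Filter.EventuallyEq.symm hev) tendsto_const_nhds)
  simpa using key
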